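/- For all integers n ≥ 5 and 1 ≤ s ≤ n−2, the signed graph Γ_{s,n} is unbalanced and contains exactly binom(s,2) distinct K₄⁻'s; in particular, Γ_{s,n} is t𝒦₄⁻-free for every integer t ≥ binom(s,2)+1. -/
import Mathlib


open Matrix

/-- A signed graph of order `n`: a real symmetric `n × n` matrix with zero diagonal
whose off-diagonal entries lie in `{-1, 0, 1}`. -/
def IsSignedGraph {n : ℕ} (A : Matrix (Fin n) (Fin n) ℝ) : Prop :=
  A.IsSymm ∧ (∀ i, A i i = 0) ∧ ∀ i j, A i j = -1 ∨ A i j = 0 ∨ A i j = 1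

/-- The index (largest eigenvalue) of a signed graph. -/
noncomputable def lambdaMax {n : ℕ} (A : Matrix (Fin n) (Fin n) ℝ) : ℝ :=
  sSup (spectrum ℝ A)

/-- The smallest eigenvalue of a signed graph. -/
noncomputable def lambdaMin {n : ℕ} (A : Matrix (Fin n) (Fin n) ℝ) : ℝ :=
  sInf (spectrum ℝ A)

/-- The spectral radius of a signed graph. -/
noncomputable def rho {n : ℕ} (A : Matrix (Fin n) (Fin n) ℝ) : ℝ :=
  max (lambdaMax A) (-(lambdaMin A))

/-- There is a cycle, all of whose vertices lie in `s`, along whose edges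
the product of the entries of `A` is negative. -/
def HasNegCycleOn {n : ℕ} (A : Matrix (Fin n) (Fin n) ℝ) (s : Set (Fin n)) : Prop :=
  ∃ m : ℕ, 3 ≤ m ∧ ∃ c : ℕ → Fin n,
    (∀ i < m, ∀ j < m, c i = c j → i = j) ∧ (∀ i < m, c i ∈ s) ∧
    (∀ i < m, A (c i) (c ((i + 1) % m)) ≠ 0) ∧
    (∏ i ∈ Finset.range m, A (c i) (c ((i + 1) % m))) < 0

/-- A signed graph is unbalanced if it has a negative cycle. -/
def IsUnbalanced {n : ℕ} (A : Matrix (Fin n) (Fin n) ℝ) : Prop :=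
  HasNegCycleOn A Set.univ

/-- An `m`-element set of pairwise adjacent vertices whose induced signed complete
subgraph is unbalanced. -/
def IsKmMinus {n : ℕ} (A : Matrix (Fin n) (Fin n) ℝ) (m : ℕ) (s : Finset (Fin n)) : Prop :=
  s.card = m ∧ (∀ i ∈ s, ∀ j ∈ s, i ≠ j → A i j ≠ 0) ∧ HasNegCycleOn A ↑s

/-- A `K₄⁻` of a signed graph. -/
def IsK4Minus {n : ℕ} (A : Matrix (Fin n) (Fin n) ℝ) (s : Finset (Fin n)) : Prop :=
  IsKmMinus A 4 s

/-- A signed graph is `t𝒦₄⁻`-free if it contains fewer than `t` distinct `K₄⁻`'s. -/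
def TK4Free {n : ℕ} (t : ℕ) (A : Matrix (Fin n) (Fin n) ℝ) : Prop :=
  {s : Finset (Fin n) | IsK4Minus A s}.ncard < t

/-- Switching isomorphism of signed graphs: `B = (PD) A (PD)ᵀ` for a permutation
matrix `P` and a `±1` diagonal matrix `D`. -/
def SwitchIso {n : ℕ} (A B : Matrix (Fin n) (Fin n) ℝ) : Prop :=
  ∃ (σ : Equiv.Perm (Fin n)) (d : Fin n → ℝ), (∀ i, d i = 1 ∨ d i = -1) ∧
    B = (σ.permMatrix ℝ * Matrix.diagonal d) * A * (σ.permMatrix ℝ * Matrix.diagonal d)ᵀ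

/-- The signed graph `Γ_{s,n}`: the vertices `0, …, n-2` are pairwise adjacent,
the last vertex `n-1` is adjacent exactly to `0, …, s`, and every edge is positive
except the single negative edge joining `n-1` and `0`. -/
noncomputable def GammaSN (s n : ℕ) : Matrix (Fin n) (Fin n) ℝ :=
  fun i j =>
    if i = j then 0
    else if i.val ≠ n - 1 ∧ j.val ≠ n - 1 then 1
    else if min i.val j.val = 0 then -1
    else if min i.val j.val ≤ s then 1
    else 0

/-- The signed graph `Σ_{k,n}` with parameter `r`: vertex `0` is `u₁`, vertex `1` is `u₂`,
vertices `2, …, r+1` are `w₁, …, w_r`, vertices `r+2, …, r+k+1` are `q₁, …, q_k`, and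
vertices `r+k+2, …, n-1` are `v₁, …, v_{n-2-r-k}`.  The only negative edge is `u₁u₂`. -/
noncomputable def SigmaKN (r k n : ℕ) : Matrix (Fin n) (Fin n) ℝ :=
  fun i j =>
    if i = j then 0
    else if min i.val j.val = 0 then (if max i.val j.val = 1 then -1 else 1)
    else if min i.val j.val = 1 then (if max i.val j.val ≤ r + k + 1 then 1 else 0)
    else if max i.val j.val ≤ r + 1 then 1
    else if max i.val j.val ≤ r + k + 1 then 0
    else 1
lemma fin_ne_of_val_ne {n : ℕ} {i j : Fin n} (h : i.val ≠ j.val) : i ≠ j :=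
  fun e => h (congrArg Fin.val e)

lemma gamma_cases {n s : ℕ} (i j : Fin n) (hij : i ≠ j) :
    GammaSN s n i j = if i.val ≠ n - 1 ∧ j.val ≠ n - 1 then 1
      else if min i.val j.val = 0 then -1 else if min i.val j.val ≤ s then 1 else 0 := by
  simp only [GammaSN, if_neg hij]

/-- If an entry of `GammaSN` is negative, it is the edge `{0, n-1}`. -/
lemma gamma_neg {n s : ℕ} {i j : Fin n} (h : GammaSN s n i j < 0) :
    (i.val = 0 ∧ j.val = n - 1) ∨ (i.val = n - 1 ∧ j.val = 0) := by
  by_cases hij : i = j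
  · simp [GammaSN, hij] at h
  rw [gamma_cases i j hij] at h
  have hij' : i.val ≠ j.val := fun e => hij (Fin.ext e)
  split_ifs at h with h1 h2 h3
  · norm_num at h
  · omega
  · norm_num at h
  · norm_num at h

lemma gamma_ne_zero {n s : ℕ} (hs2 : s ≤ n - 2) (hn : 5 ≤ n) {i j : Fin n}
    (hij : i.val ≠ j.val) (hi : i.val ≤ s ∨ i.val = n - 1)
    (hj : j.val ≤ s ∨ j.val = n - 1) : GammaSN s n i j ≠ 0 := by
  rw [gamma_cases i j (fin_ne_of_val_ne hij)]
  split_ifs with h1 h2 h3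
  · norm_num
  · norm_num
  · norm_num
  · exfalso; omega

lemma hasNegCycle_triangle {n : ℕ} {A : Matrix (Fin n) (Fin n) ℝ} {x y z : Fin n}
    {S : Set (Fin n)} (hx : x ∈ S) (hy : y ∈ S) (hz : z ∈ S)
    (hxy : x ≠ y) (hyz : y ≠ z) (hxz : x ≠ z)
    (h1 : A x y ≠ 0) (h2 : A y z ≠ 0) (h3 : A z x ≠ 0)
    (hneg : A x y * A y z * A z x < 0) :
    HasNegCycleOn A S := by
  refine ⟨3, le_refl 3, fun i => if i = 0 then x else if i = 1 then y else z,
    ?_, ?_, ?_, ?_⟩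
  · intro i hi j hj h
    interval_cases i <;> interval_cases j <;> simp_all
  · intro i hi
    interval_cases i
    · simpa using hx
    · simpa using hy
    · simpa using hz
  · intro i hi
    interval_cases i
    · simpa using h1
    · simpa using h2
    · simpa using h3
  · have : (∏ i ∈ Finset.range 3,
        A ((fun i => if i = 0 then x else if i = 1 then y else z) i)
          ((fun i => if i = 0 then x else if i = 1 then y else z) ((i + 1) % 3)))
        = A x y * A y z * A z x := by
      simp [Finset.prod_range_succ]
    rw [this]; exact hneg

lemma exists_neg_entry {n : ℕ} {A : Matrix (Fin n) (Fin n) ℝ} {S : Set (Fin n)}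
    (h : HasNegCycleOn A S) : ∃ i ∈ S, ∃ j ∈ S, A i j < 0 := by
  obtain ⟨m, hm, c, hinj, hmem, hne, hprod⟩ := h
  by_contra hc
  push_neg at hc
  refine absurd hprod (not_lt.mpr (Finset.prod_nonneg fun i hi => ?_))
  have hi' : i < m := Finset.mem_range.mp hi
  exact hc _ (hmem i hi') _ (hmem _ (Nat.mod_lt _ (by omega)))

theorem GammaSN_unbalanced_K4minus_count (n s : ℕ) (hn : 5 ≤ n) (hs1 : 1 ≤ s)
    (hs2 : s ≤ n - 2) :
    IsUnbalanced (GammaSN s n) ∧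
      {q : Finset (Fin n) | IsK4Minus (GammaSN s n) q}.ncard = s.choose 2 ∧
      ∀ t : ℕ, s.choose 2 + 1 ≤ t → TK4Free t (GammaSN s n) := by
  set A := GammaSN s n with hA
  have hv0 : 0 < n := by omega
  have hvl : n - 1 < n := by omega
  set v0 : Fin n := ⟨0, hv0⟩ with hv0d
  set vl : Fin n := ⟨n - 1, hvl⟩ with hvld
  have h0v : v0.val = 0 := rfl
  have hlv : vl.val = n - 1 := rfl
  have hv0vl : v0 ≠ vl := fin_ne_of_val_ne (by omega)
  -- key entry values
  have hAvl0 : A vl v0 = -1 := by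
    rw [hA, gamma_cases _ _ (Ne.symm hv0vl)]
    rw [if_neg (by omega), if_pos (by omega)]
  have hA0x : ∀ x : Fin n, x.val ≠ 0 → x.val ≠ n - 1 → A v0 x = 1 := by
    intro x h0 h1
    rw [hA, gamma_cases _ _ (fin_ne_of_val_ne (by omega))]
    rw [if_pos ⟨by omega, h1⟩]
  have hAxvl : ∀ x : Fin n, 1 ≤ x.val → x.val ≤ s → A x vl = 1 := by
    intro x h0 h1
    rw [hA, gamma_cases _ _ (fin_ne_of_val_ne (by omega))]
    rw [if_neg (by omega), if_neg (by omega), if_pos (by omega)]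
  -- a triangle through any middle vertex with value in [1, s]
  have htri : ∀ (S : Set (Fin n)) (x : Fin n), 1 ≤ x.val → x.val ≤ s →
      v0 ∈ S → x ∈ S → vl ∈ S → HasNegCycleOn A S := by
    intro S x hx1 hx2 hS0 hSx hSl
    have hx0 : A v0 x = 1 := hA0x x (by omega) (by omega)
    have hxl : A x vl = 1 := hAxvl x hx1 hx2
    refine hasNegCycle_triangle hS0 hSx hSl
      (fin_ne_of_val_ne (by omega))
      (fin_ne_of_val_ne (by omega))
      (fin_ne_of_val_ne (by omega))
      (by rw [hx0]; norm_num) (by rw [hxl]; norm_num) (by rw [hAvl0]; norm_num) ?_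
    rw [hx0, hxl, hAvl0]; norm_num
  have hone : (1 : ℕ) < n := by omega
  have hunb : IsUnbalanced A :=
    htri Set.univ ⟨1, hone⟩ (le_refl 1) hs1 trivial trivial trivial
  -- the counting
  have hattach : ∀ m ∈ Finset.Icc 1 s, m < n := by intro m hm; simp at hm; omega
  set I : Finset (Fin n) := (Finset.Icc 1 s).attachFin hattach with hI
  have hImem : ∀ x : Fin n, x ∈ I ↔ 1 ≤ x.val ∧ x.val ≤ s := by
    intro x; rw [hI, Finset.mem_attachFin, Finset.mem_Icc]
  have hv0I : v0 ∉ I := by rw [hImem]; omega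
  have hvlI : vl ∉ I := by rw [hImem]; omega
  set f : Finset (Fin n) → Finset (Fin n) := fun p => insert v0 (insert vl p) with hf
  set T : Finset (Finset (Fin n)) := (I.powersetCard 2).image f with hT
  have hrecover : ∀ p ∈ I.powersetCard 2, ((f p).erase v0).erase vl = p := by
    intro p hp
    rw [Finset.mem_powersetCard] at hp
    have h1 : v0 ∉ insert vl p := by
      simp only [Finset.mem_insert]
      push_neg
      exact ⟨hv0vl, fun h => hv0I (hp.1 h)⟩
    rw [hf]
    simp only
    rw [Finset.erase_insert h1, Finset.erase_insert (fun h => hvlI (hp.1 h))]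
  have hsetK : {q : Finset (Fin n) | IsK4Minus A q} = ↑T := by
    ext q
    simp only [Set.mem_setOf_eq, hT, Finset.mem_coe, Finset.mem_image]
    constructor
    · rintro ⟨hcard, hadj, hcyc⟩
      obtain ⟨i, hiq, j, hjq, hneg⟩ := exists_neg_entry hcyc
      have hij := gamma_neg hneg
      have h0q : v0 ∈ q ∧ vl ∈ q := by
        rcases hij with ⟨h1, h2⟩ | ⟨h1, h2⟩
        · exact ⟨by rwa [show v0 = i from Fin.ext h1.symm],
            by rwa [show vl = j from Fin.ext h2.symm]⟩
        · exact ⟨by rwa [show v0 = j from Fin.ext h2.symm],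
            by rwa [show vl = i from Fin.ext h1.symm]⟩
      obtain ⟨h0q, hlq⟩ := h0q
      set p := (q.erase v0).erase vl with hp
      have hvl' : vl ∈ q.erase v0 := Finset.mem_erase.mpr ⟨Ne.symm hv0vl, hlq⟩
      have hqp : q = f p := by
        rw [hf, hp]
        simp only
        rw [Finset.insert_erase hvl', Finset.insert_erase h0q]
      refine ⟨p, Finset.mem_powersetCard.mpr ⟨?_, ?_⟩, hqp.symm⟩
      · intro x hx
        rw [hp] at hx
        have hxvl : x ≠ vl := (Finset.mem_erase.mp hx).1
        have hxrest := (Finset.mem_erase.mp hx).2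
        have hxv0 : x ≠ v0 := (Finset.mem_erase.mp hxrest).1
        have hxq : x ∈ q := (Finset.mem_erase.mp hxrest).2
        have hne := hadj x hxq vl hlq hxvl
        rw [hImem]
        constructor
        · have : x.val ≠ 0 := fun h => hxv0 (Fin.ext h)
          omega
        · by_contra hc
          push_neg at hc
          apply hne
          rw [hA, gamma_cases _ _ hxvl]
          have hxval : x.val ≠ n - 1 := fun h => hxvl (Fin.ext h)
          have hxv0' : x.val ≠ 0 := fun h => hxv0 (Fin.ext h)
          rw [if_neg (by omega), if_neg (by omega), if_neg (by omega)]
      · have c1 : (q.erase v0).card = 3 := by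
          rw [Finset.card_erase_of_mem h0q, hcard]
        rw [hp, Finset.card_erase_of_mem hvl', c1]
    · rintro ⟨p, hp, rfl⟩
      have hpmem := Finset.mem_powersetCard.mp hp
      have hv0p : v0 ∉ insert vl p := by
        simp only [Finset.mem_insert]
        push_neg
        exact ⟨hv0vl, fun h => hv0I (hpmem.1 h)⟩
      have hvlp : vl ∉ p := fun h => hvlI (hpmem.1 h)
      obtain ⟨a, b, hab, hpab⟩ := Finset.card_eq_two.mp hpmem.2
      have haI : a ∈ I := hpmem.1 (by rw [hpab]; simp)
      have hbI : b ∈ I := hpmem.1 (by rw [hpab]; simp)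
      rw [hImem] at haI hbI
      refine ⟨?_, ?_, ?_⟩
      · rw [hf]
        simp only
        rw [Finset.card_insert_of_notMem hv0p, Finset.card_insert_of_notMem hvlp,
          hpmem.2]
      · intro i hi j hj hij
        rw [hf] at hi hj
        simp only [Finset.mem_insert, Finset.mem_singleton, hpab] at hi hj
        have hi' : i.val ≤ s ∨ i.val = n - 1 := by
          rcases hi with rfl | rfl | rfl | rfl
          · left; omega
          · right; exact hlv
          · left; exact haI.2
          · left; exact hbI.2
        have hj' : j.val ≤ s ∨ j.val = n - 1 := by
          rcases hj with rfl | rfl | rfl | rfl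
          · left; omega
          · right; exact hlv
          · left; exact haI.2
          · left; exact hbI.2
        exact gamma_ne_zero hs2 hn (fun e => hij (Fin.ext e)) hi' hj'
      · refine htri _ a haI.1 haI.2 ?_ ?_ ?_ <;> simp [hf, hpab]
  have hinjf : Set.InjOn f ↑(I.powersetCard 2) := by
    intro p1 h1 p2 h2 he
    rw [← hrecover p1 h1, ← hrecover p2 h2, he]
  have hcount : {q : Finset (Fin n) | IsK4Minus A q}.ncard = s.choose 2 := by
    rw [hsetK, Set.ncard_coe_finset, hT,
      Finset.card_image_of_injOn hinjf, Finset.card_powersetCard, hI,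
      Finset.card_attachFin, Nat.card_Icc]
    norm_num
  exact ⟨hunb, hcount, fun t ht => by
    unfold TK4Free
    rw [hcount]
    omega⟩
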